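/- Let ρ > 0 and N ≥ 2. Then P(H_N = 1) = 1/(1 + ρ(N−1)), and consequently Var(H_N) ≥ (E(H_N) − 1)²/(1 + ρ(N−1)). In particular, for ρ ≥ 1 and all sufficiently large N, Var(H_N) ≥ (N−5)²/(1 + ρ(N−1)). -/

import Mathlib

open Finset Filter Real Topology

/-- `r_{ρ,n}(i) = ρ^{-i} * C(n-1, i)^{-1}`. -/
noncomputable def rfun (ρ : ℝ) (n i : ℕ) : ℝ := (ρ ^ i * (Nat.choose (n - 1) i : ℝ))⁻¹

/-- `P(H_N ≥ k)` for `k = 1,…,N`, and `0` for `k > N`. -/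
noncomputable def tailP (ρ : ℝ) (N k : ℕ) : ℝ :=
  if k ≤ N then (∑ i ∈ Finset.range k, rfun ρ N i)⁻¹ else 0

/-- `P(H_N = k) = P(H_N ≥ k) − P(H_N ≥ k+1)`. -/
noncomputable def pmfP (ρ : ℝ) (N k : ℕ) : ℝ := tailP ρ N k - tailP ρ N (k + 1)

/-- `E(H_N) = ∑_{k=1}^N P(H_N ≥ k)`. -/
noncomputable def EH (ρ : ℝ) (N : ℕ) : ℝ := ∑ k ∈ Finset.Icc 1 N, tailP ρ N k

/-- `Var(H_N) = ∑_{k=1}^N (k − E(H_N))² P(H_N = k)`. -/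
noncomputable def VarH (ρ : ℝ) (N : ℕ) : ℝ :=
  ∑ k ∈ Finset.Icc 1 N, ((k : ℝ) - EH ρ N) ^ 2 * pmfP ρ N k

/-- `P(H_N ≤ t)` for a real threshold `t`. -/
noncomputable def cdfP (ρ : ℝ) (N : ℕ) (t : ℝ) : ℝ :=
  ∑ k ∈ (Finset.Icc 1 N).filter (fun k : ℕ => (k : ℝ) ≤ t), pmfP ρ N k

/- ### Auxiliary lemmas -/

lemma rfun_nonneg {ρ : ℝ} (hρ : 0 < ρ) (n i : ℕ) : 0 ≤ rfun ρ n i := by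
  unfold rfun; positivity

lemma rfun_zero (ρ : ℝ) (n : ℕ) : rfun ρ n 0 = 1 := by simp [rfun]

lemma one_le_sum_rfun {ρ : ℝ} (hρ : 0 < ρ) (N k : ℕ) (hk : 1 ≤ k) :
    1 ≤ ∑ i ∈ Finset.range k, rfun ρ N i := by
  have h0 : (0:ℕ) ∈ Finset.range k := by simp; omega
  have := Finset.single_le_sum (f := fun i => rfun ρ N i)
    (fun i _ => rfun_nonneg hρ N i) h0
  simp only [rfun_zero] at this
  exact this

lemma pmfP_nonneg {ρ : ℝ} (hρ : 0 < ρ) (N k : ℕ) (hk : 1 ≤ k) : 0 ≤ pmfP ρ N k := by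
  unfold pmfP tailP
  by_cases h2 : k + 1 ≤ N
  · rw [if_pos (by omega), if_pos h2, sub_nonneg]
    have h1 : (0:ℝ) < ∑ i ∈ Finset.range k, rfun ρ N i :=
      lt_of_lt_of_le one_pos (one_le_sum_rfun hρ N k hk)
    apply inv_anti₀ h1
    rw [Finset.sum_range_succ]
    exact le_add_of_nonneg_right (rfun_nonneg hρ N k)
  · rw [if_neg h2]
    by_cases h1 : k ≤ N
    · rw [if_pos h1]
      have h1' : (0:ℝ) < ∑ i ∈ Finset.range k, rfun ρ N i :=
        lt_of_lt_of_le one_pos (one_le_sum_rfun hρ N k hk)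
      simp only [sub_zero]
      positivity
    · rw [if_neg h1]; simp

lemma pmfP_one {ρ : ℝ} (hρ : 0 < ρ) (N : ℕ) (hN : 2 ≤ N) :
    pmfP ρ N 1 = 1 / (1 + ρ * ((N : ℝ) - 1)) := by
  have hc : ((N - 1 : ℕ) : ℝ) = (N : ℝ) - 1 := by
    push_cast [Nat.cast_sub (by omega : 1 ≤ N)]; ring
  have hcpos : (0:ℝ) < (N : ℝ) - 1 := by
    have : (2:ℝ) ≤ (N:ℝ) := by exact_mod_cast hN
    linarith
  unfold pmfP tailP
  rw [if_pos (by omega : 1 ≤ N), if_pos (by omega : 1 + 1 ≤ N)]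
  rw [Finset.sum_range_one, Finset.sum_range_succ, Finset.sum_range_one, rfun_zero]
  unfold rfun
  rw [Nat.choose_one_right, hc, pow_one]
  have hd : (0:ℝ) < ρ * ((N:ℝ) - 1) := by positivity
  rw [inv_one]
  field_simp
  ring

lemma choose_two_le {M j : ℕ} (h2 : 2 ≤ j) (hj : j + 2 ≤ M) :
    M.choose 2 ≤ M.choose j := by
  have key := Nat.choose_mul (n := M) (k := j) (s := 2) h2
  have hjc : j.choose 2 ≤ (M - 2).choose (j - 2) := by
    calc j.choose 2 = j.choose (j - 2) := (Nat.choose_symm h2).symm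
    _ ≤ (M - 2).choose (j - 2) := Nat.choose_le_choose _ (by omega)
  have hpos : 0 < j.choose 2 := Nat.choose_pos h2
  have : M.choose 2 * j.choose 2 ≤ M.choose j * j.choose 2 := by
    rw [key]; exact Nat.mul_le_mul_left _ hjc
  exact Nat.le_of_mul_le_mul_right this hpos

lemma gauss_bound (K : ℕ) :
    ∑ i ∈ Finset.range (K + 1), ((K : ℝ) + 3 - i) ≤ ((K + 4).choose 2 : ℝ) := by
  induction K with
  | zero => simp; norm_num [Nat.choose]
  | succ n ih =>
    have h1 : ∀ x ∈ Finset.range (n + 1), ((n:ℝ) + 1 + 3 - x) = ((n:ℝ) + 3 - x) + 1 := by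
      intro x _; push_cast; ring
    push_cast
    rw [Finset.sum_range_succ, Finset.sum_congr rfl h1, Finset.sum_add_distrib]
    simp only [Finset.sum_const, Finset.card_range, nsmul_eq_mul, mul_one]
    have hc : ((n + 1 + 4).choose 2 : ℝ) = ((n + 4).choose 2 : ℝ) + (n + 4 : ℝ) := by
      rw [Nat.cast_choose_two, Nat.cast_choose_two]
      push_cast; ring
    rw [hc]
    push_cast
    linarith

lemma weighted_inv_choose_sum_le (K : ℕ) :
    ∑ i ∈ Finset.range (K + 4), (((K:ℝ) + 4) - i) / (((K + 4).choose (i + 1) : ℕ) : ℝ) ≤ 4 := by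
  rw [Finset.sum_range_succ, Finset.sum_range_succ, Finset.sum_range_succ']
  have e0 : (K + 4).choose (0 + 1) = K + 4 := Nat.choose_one_right _
  have etop : (K + 4).choose (K + 3 + 1) = 1 := Nat.choose_self _
  have etop2 : (K + 4).choose (K + 2 + 1) = K + 4 := Nat.choose_succ_self_right _
  rw [e0, etop, etop2]
  have hmid : ∑ i ∈ Finset.range (K + 1), (((K:ℝ) + 4) - (i + 1)) / (((K + 4).choose (i + 1 + 1) : ℕ) : ℝ)
      ≤ 1 := by
    have hper : ∀ i ∈ Finset.range (K + 1),
        (((K:ℝ) + 4) - (i + 1)) / (((K + 4).choose (i + 1 + 1) : ℕ) : ℝ)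
        ≤ (((K:ℝ) + 3) - i) / (((K + 4).choose 2 : ℕ) : ℝ) := by
      intro i hi
      simp only [Finset.mem_range] at hi
      have hnum : (0:ℝ) ≤ ((K:ℝ) + 3) - i := by
        have : (i:ℝ) ≤ (K:ℝ) := by exact_mod_cast Nat.lt_succ_iff.mp hi
        linarith
      have hch : ((K + 4).choose 2 : ℝ) ≤ ((K + 4).choose (i + 2) : ℝ) := by
        exact_mod_cast choose_two_le (by omega) (by omega)
      have hchpos : (0:ℝ) < ((K + 4).choose 2 : ℝ) := by
        exact_mod_cast Nat.choose_pos (by omega)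
      have heq : ((K:ℝ) + 4) - (i + 1) = ((K:ℝ) + 3) - i := by ring
      rw [heq, show i + 1 + 1 = i + 2 from rfl]
      exact div_le_div_of_nonneg_left hnum hchpos hch
    calc ∑ i ∈ Finset.range (K + 1), (((K:ℝ) + 4) - (i + 1)) / (((K + 4).choose (i + 1 + 1) : ℕ) : ℝ)
        ≤ ∑ i ∈ Finset.range (K + 1), (((K:ℝ) + 3) - i) / (((K + 4).choose 2 : ℕ) : ℝ) :=
          Finset.sum_le_sum hper
      _ = (∑ i ∈ Finset.range (K + 1), (((K:ℝ) + 3) - i)) / (((K + 4).choose 2 : ℕ) : ℝ) := by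
          rw [Finset.sum_div]
      _ ≤ 1 := by
          have hchpos : (0:ℝ) < ((K + 4).choose 2 : ℝ) := by
            exact_mod_cast Nat.choose_pos (by omega)
          rw [div_le_one hchpos]
          exact gauss_bound K
  have h2 : (((K:ℝ) + 4) - ((K:ℝ) + 2)) / (((K + 4 : ℕ) : ℕ) : ℝ) ≤ 1 := by
    push_cast
    rw [div_le_one (by positivity)]
    linarith
  have h3 : (((K:ℝ) + 4) - ((K:ℝ) + 3)) / ((1 : ℕ) : ℝ) ≤ 1 := by
    push_cast; norm_num
  have h0 : (((K:ℝ) + 4) - 0) / (((K + 4 : ℕ) : ℕ) : ℝ) ≤ 1 := by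
    push_cast
    rw [div_le_one (by positivity)]
    linarith
  push_cast at *
  linarith

lemma sum_swap_tri (f : ℕ → ℝ) (N : ℕ) :
    ∑ k ∈ Finset.Icc 1 N, ∑ i ∈ Finset.range k, f i
      = ∑ i ∈ Finset.range N, ((N : ℝ) - i) * f i := by
  induction N with
  | zero => simp
  | succ n ih =>
    rw [Finset.sum_Icc_succ_top (by omega), ih, Finset.sum_range_succ,
      Finset.sum_range_succ]
    push_cast
    have : ∀ x ∈ Finset.range n, ((n:ℝ) + 1 - x) * f x = ((n:ℝ) - x) * f x + f x := by
      intro x _; ring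
    rw [Finset.sum_congr rfl this, Finset.sum_add_distrib]
    ring

lemma EH_lower {ρ : ℝ} (hρ : 0 < ρ) (hρ1 : 1 ≤ ρ) (N : ℕ) (hN : 5 ≤ N) :
    (N : ℝ) - 4 ≤ EH ρ N := by
  obtain ⟨K, rfl⟩ : ∃ K, N = K + 5 := ⟨N - 5, by omega⟩
  set N := K + 5 with hNdef
  have step1 : ∀ k ∈ Finset.Icc 1 N, 2 - (∑ i ∈ Finset.range k, rfun ρ N i) ≤ tailP ρ N k := by
    intro k hk
    simp only [Finset.mem_Icc] at hk
    set S := ∑ i ∈ Finset.range k, rfun ρ N i with hS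
    have h1 : 1 ≤ S := one_le_sum_rfun hρ N k hk.1
    have hSpos : 0 < S := lt_of_lt_of_le one_pos h1
    rw [tailP, if_pos hk.2]
    have hinv := mul_inv_cancel₀ (ne_of_gt hSpos)
    have hinvpos : 0 < S⁻¹ := inv_pos.mpr hSpos
    nlinarith [sq_nonneg (S - 1)]
  have step2 : 2 * (N:ℝ) - (∑ k ∈ Finset.Icc 1 N, ∑ i ∈ Finset.range k, rfun ρ N i)
      ≤ EH ρ N := by
    have := Finset.sum_le_sum step1
    rw [Finset.sum_sub_distrib, Finset.sum_const, Nat.card_Icc] at this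
    simp only [Nat.add_sub_cancel, nsmul_eq_mul] at this
    calc 2 * (N:ℝ) - _ = (N:ℝ) * 2 - _ := by ring
    _ ≤ EH ρ N := this
  rw [sum_swap_tri (fun i => rfun ρ N i) N] at step2
  have hsplit : ∑ i ∈ Finset.range N, ((N:ℝ) - i) * rfun ρ N i
      = (∑ i ∈ Finset.range (K + 4), ((N:ℝ) - (i + 1)) * rfun ρ N (i + 1)) + (N:ℝ) := by
    rw [show N = (K + 4) + 1 from rfl, Finset.sum_range_succ']
    push_cast
    rw [rfun_zero]
    ring
  rw [hsplit] at step2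
  have hB : ∑ i ∈ Finset.range (K + 4), ((N:ℝ) - (i + 1)) * rfun ρ N (i + 1) ≤ 4 := by
    refine le_trans (Finset.sum_le_sum ?_) (weighted_inv_choose_sum_le K)
    intro i hi
    simp only [Finset.mem_range] at hi
    have hN1 : N - 1 = K + 4 := rfl
    rw [rfun, hN1]
    have hnum : (0:ℝ) ≤ ((K:ℝ) + 4) - i := by
      have : (i:ℝ) ≤ (K:ℝ) + 3 := by exact_mod_cast Nat.lt_succ_iff.mp hi
      linarith
    have hnum2 : ((N:ℝ) - (i + 1)) = ((K:ℝ) + 4) - i := by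
      push_cast [hNdef]; ring
    rw [hnum2]
    have hcpos : (0:ℝ) < (((K + 4).choose (i + 1) : ℕ) : ℝ) := by
      exact_mod_cast Nat.choose_pos (by omega)
    have hpow : (1:ℝ) ≤ ρ ^ (i + 1) := one_le_pow₀ hρ1
    rw [div_eq_mul_inv]
    apply mul_le_mul_of_nonneg_left _ hnum
    apply inv_anti₀ hcpos
    calc (((K + 4).choose (i + 1) : ℕ) : ℝ) = 1 * _ := (one_mul _).symm
    _ ≤ ρ ^ (i + 1) * (((K + 4).choose (i + 1) : ℕ) : ℝ) :=
        mul_le_mul_of_nonneg_right hpow (le_of_lt hcpos)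
  linarith

theorem var_height_lower_bound (ρ : ℝ) (hρ : 0 < ρ) :
    (∀ N : ℕ, 2 ≤ N →
      pmfP ρ N 1 = 1 / (1 + ρ * ((N : ℝ) - 1)) ∧
      VarH ρ N ≥ (EH ρ N - 1) ^ 2 / (1 + ρ * ((N : ℝ) - 1))) ∧
    (1 ≤ ρ → ∀ᶠ N : ℕ in atTop,
      VarH ρ N ≥ ((N : ℝ) - 5) ^ 2 / (1 + ρ * ((N : ℝ) - 1))) := by
  have hA : ∀ N : ℕ, 2 ≤ N →
      pmfP ρ N 1 = 1 / (1 + ρ * ((N : ℝ) - 1)) ∧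
      VarH ρ N ≥ (EH ρ N - 1) ^ 2 / (1 + ρ * ((N : ℝ) - 1)) := by
    intro N hN
    have hp1 := pmfP_one hρ N hN
    refine ⟨hp1, ?_⟩
    have hmem : (1:ℕ) ∈ Finset.Icc 1 N := by simp; omega
    have key := Finset.single_le_sum
      (f := fun k : ℕ => ((k:ℝ) - EH ρ N)^2 * pmfP ρ N k)
      (fun k hk => mul_nonneg (sq_nonneg _)
        (pmfP_nonneg hρ N k (by simp only [Finset.mem_Icc] at hk; omega))) hmem
    have key' : ((1:ℝ) - EH ρ N)^2 * pmfP ρ N 1 ≤ VarH ρ N := by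
      simpa [VarH] using key
    calc (EH ρ N - 1) ^ 2 / (1 + ρ * ((N : ℝ) - 1))
        = ((1:ℝ) - EH ρ N)^2 * pmfP ρ N 1 := by rw [hp1]; ring
    _ ≤ VarH ρ N := key'
  refine ⟨hA, fun hρ1 => ?_⟩
  filter_upwards [Filter.eventually_ge_atTop 5] with N hN5
  obtain ⟨hp1, hvar⟩ := hA N (by omega)
  have hE := EH_lower hρ hρ1 N hN5
  have hN5' : (5:ℝ) ≤ (N:ℝ) := by exact_mod_cast hN5
  have hD : (0:ℝ) < 1 + ρ * ((N:ℝ) - 1) := by nlinarith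
  have hsq : ((N:ℝ) - 5)^2 ≤ (EH ρ N - 1)^2 := by nlinarith [hE, hN5']
  calc ((N:ℝ) - 5) ^ 2 / (1 + ρ * ((N : ℝ) - 1))
      ≤ (EH ρ N - 1) ^ 2 / (1 + ρ * ((N : ℝ) - 1)) := by gcongr
  _ ≤ VarH ρ N := hvar
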